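/- Optimality of water-filling with respect to submajorization: let (X, μ) be a probability space, f ∈ L∞(X,μ)⁺, w ≥ ∫_X f dμ, and let c ≥ essinf f be the unique level such that ∫_X max{f, c} dμ = w. Then for every h ∈ L∞(X,μ)⁺ with f ≤ h a.e. and ∫_X h dμ ≥ w, the function f_c = max{f, c} is submajorized by h, i.e. ∫_0^s (f_c)*(t) dt ≤ ∫_0^s h*(t) dt for all s ∈ [0,1]. -/

import Mathlib

open MeasureTheory Set

/-- The decreasing rearrangement `f*(s) = sup { t ≥ 0 : μ{x : f x > t} > s }`. -/
noncomputable def decRearr {X : Type*} [MeasurableSpace X] (μ : Measure X)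
    (f : X → ℝ) (s : ℝ) : ℝ :=
  sSup {t : ℝ | 0 ≤ t ∧ ENNReal.ofReal s < μ {x | t < f x}}

/-- `g ≺_w f` : `f` submajorizes `g`. -/
def Submajorizes {X : Type*} [MeasurableSpace X] (μ : Measure X)
    (f g : X → ℝ) : Prop :=
  ∀ s ∈ Icc (0:ℝ) 1, ∫ t in (0:ℝ)..s, decRearr μ g t ≤ ∫ t in (0:ℝ)..s, decRearr μ f t

section Aux

variable {X : Type*} [MeasurableSpace X] {μ : Measure X} {g : X → ℝ} {C : ℝ}

lemma decRearr_nonneg (s : ℝ) : 0 ≤ decRearr μ g s :=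
  Real.sSup_nonneg (fun _ ht => ht.1)

lemma mem_decRearr_le (hb : ∀ᵐ x ∂μ, g x ≤ C) {s t : ℝ}
    (ht : t ∈ {t : ℝ | 0 ≤ t ∧ ENNReal.ofReal s < μ {x | t < g x}}) : t ≤ max C 0 := by
  by_contra hlt
  push_neg at hlt
  have hC : C < t := lt_of_le_of_lt (le_max_left _ _) hlt
  have hnull : μ {x | ¬ g x ≤ C} = 0 := by
    simpa [ae_iff] using hb
  have hsub : {x | t < g x} ⊆ {x | ¬ g x ≤ C} := by
    intro x hx
    simp only [mem_setOf_eq, not_le] at hx ⊢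
    exact hC.trans hx
  have h0 : μ {x | t < g x} = 0 := measure_mono_null hsub hnull
  have ht2 : ENNReal.ofReal s < μ {x | t < g x} := ht.2
  rw [h0] at ht2
  exact (not_lt.2 zero_le) ht2

lemma decRearr_le (hb : ∀ᵐ x ∂μ, g x ≤ C) (s : ℝ) : decRearr μ g s ≤ max C 0 :=
  Real.sSup_le (fun _ ht => mem_decRearr_le hb ht) (le_max_right _ _)

lemma decRearr_antitone (hb : ∀ᵐ x ∂μ, g x ≤ C) : Antitone (decRearr μ g) := by
  intro s s' hss'
  rcases eq_empty_or_nonempty {t : ℝ | 0 ≤ t ∧ ENNReal.ofReal s' < μ {x | t < g x}} with he | hne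
  · unfold decRearr
    rw [he, Real.sSup_empty]
    exact decRearr_nonneg s
  · apply csSup_le_csSup _ hne
    · intro t ht
      exact ⟨ht.1, lt_of_le_of_lt (ENNReal.ofReal_le_ofReal hss') ht.2⟩
    · exact ⟨max C 0, fun _ ht => mem_decRearr_le hb ht⟩

lemma decRearr_lt_iff (hm : Measurable g) (hb : ∀ᵐ x ∂μ, g x ≤ C) {a : ℝ} (ha : 0 ≤ a)
    (s : ℝ) : a < decRearr μ g s ↔ ENNReal.ofReal s < μ {x | a < g x} := by
  constructor
  · intro hlt
    have hne : {t : ℝ | 0 ≤ t ∧ ENNReal.ofReal s < μ {x | t < g x}}.Nonempty := by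
      by_contra hne
      rw [not_nonempty_iff_eq_empty] at hne
      unfold decRearr at hlt
      rw [hne, Real.sSup_empty] at hlt
      exact absurd hlt (not_lt.2 ha)
    obtain ⟨t, ht, hat⟩ := exists_lt_of_lt_csSup hne hlt
    exact lt_of_lt_of_le ht.2 (measure_mono (fun x hx => hat.trans hx))
  · intro hμ
    have hU : {x | a < g x} = ⋃ n : ℕ, {x | a + 1 / (n + 1) < g x} := by
      ext x
      simp only [mem_setOf_eq, mem_iUnion]
      constructor
      · intro hx
        obtain ⟨n, hn⟩ := exists_nat_one_div_lt (sub_pos.2 hx)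
        exact ⟨n, by linarith [hn]⟩
      · rintro ⟨n, hn⟩
        have : (0:ℝ) < 1 / (n + 1) := by positivity
        linarith
    have hdir : Directed (· ⊆ ·) (fun n : ℕ => {x | a + 1 / (n + 1) < g x}) := by
      intro m n
      refine ⟨max m n, fun x hx => ?_, fun x hx => ?_⟩ <;>
      · simp only [mem_setOf_eq] at hx ⊢
        refine lt_of_le_of_lt (add_le_add_right ?_ a) hx
        apply one_div_le_one_div_of_le (by positivity)
        push_cast
        simp [le_max_left, le_max_right]
    have hmeas : ∀ n : ℕ, MeasurableSet {x | a + 1 / (n + 1) < g x} :=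
      fun n => measurableSet_lt measurable_const hm
    rw [hU, hdir.measure_iUnion] at hμ
    rw [lt_iSup_iff] at hμ
    obtain ⟨n, hn⟩ := hμ
    have hpos : (0:ℝ) < 1 / (n + 1) := by positivity
    have hmem : a + 1 / (n + 1) ∈ {t : ℝ | 0 ≤ t ∧ ENNReal.ofReal s < μ {x | t < g x}} :=
      ⟨by linarith, hn⟩
    calc a < a + 1 / (n + 1) := by linarith
    _ ≤ decRearr μ g s :=
      le_csSup ⟨max C 0, fun _ ht => mem_decRearr_le hb ht⟩ hmem

lemma dist_decRearr_eq [IsProbabilityMeasure μ] (hm : Measurable g)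
    (hb : ∀ᵐ x ∂μ, g x ≤ C) {a : ℝ} (ha : 0 ≤ a) :
    volume ({s | a < decRearr μ g s} ∩ Ioc (0:ℝ) 1) = μ {x | a < g x} := by
  set M : ENNReal := μ {x | a < g x} with hM
  have hM1 : M ≤ 1 := prob_le_one
  have hMne : M ≠ ⊤ := (lt_of_le_of_lt hM1 ENNReal.one_lt_top).ne
  rcases eq_or_ne M 0 with h0 | h0
  · have : {s | a < decRearr μ g s} ∩ Ioc (0:ℝ) 1 = ∅ := by
      ext s
      simp only [mem_inter_iff, mem_setOf_eq, mem_empty_iff_false, iff_false, not_and]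
      intro hlt _
      rw [decRearr_lt_iff hm hb ha s, ← hM, h0] at hlt
      exact absurd hlt (by simp)
    rw [this, h0]
    simp
  · have hMt : M.toReal ≤ 1 := by
      rw [← ENNReal.toReal_one]
      exact ENNReal.toReal_mono ENNReal.one_ne_top hM1
    have heq : {s | a < decRearr μ g s} ∩ Ioc (0:ℝ) 1 = Ioc 0 (min M.toReal 1) ∩ Iio M.toReal := by
      ext s
      simp only [mem_inter_iff, mem_setOf_eq, mem_Ioc, mem_Iio, lt_min_iff]
      constructor
      · rintro ⟨hlt, hs0, hs1⟩
        rw [decRearr_lt_iff hm hb ha s, ← hM] at hlt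
        have hsM : s < M.toReal := by
          rwa [← ENNReal.ofReal_lt_iff_lt_toReal hs0.le hMne]
        exact ⟨⟨hs0, le_min hsM.le hs1⟩, hsM⟩
      · rintro ⟨⟨hs0, hsmin⟩, hsM⟩
        refine ⟨?_, hs0, le_trans hsmin (min_le_right _ _)⟩
        rw [decRearr_lt_iff hm hb ha s, ← hM]
        rwa [ENNReal.ofReal_lt_iff_lt_toReal hs0.le hMne]
    rw [heq]
    have : Ioc 0 (min M.toReal 1) ∩ Iio M.toReal = Ioo 0 M.toReal := by
      rw [min_eq_left hMt]
      ext s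
      simp only [mem_inter_iff, mem_Ioc, mem_Iio, mem_Ioo]
      constructor
      · rintro ⟨⟨h1, _⟩, h3⟩; exact ⟨h1, h3⟩
      · rintro ⟨h1, h2⟩; exact ⟨⟨h1, le_of_lt h2⟩, h2⟩
    rw [this, Real.volume_Ioo, sub_zero, hM, ENNReal.ofReal_toReal hMne]

lemma integrable_of_bounds [IsFiniteMeasure μ] {g : X → ℝ}
    (hm : AEStronglyMeasurable g μ) {D : ℝ} (h0 : ∀ᵐ x ∂μ, 0 ≤ g x)
    (hb : ∀ᵐ x ∂μ, g x ≤ D) : Integrable g μ := by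
  refine (integrable_const D).mono' hm ?_
  filter_upwards [h0, hb] with x h1 h2
  rw [Real.norm_eq_abs, abs_of_nonneg h1]
  exact h2

/-- Key equimeasurability identity. -/
lemma integral_decRearr_sub_max [IsProbabilityMeasure μ] (hm : Measurable g)
    (hb : ∀ᵐ x ∂μ, g x ≤ C) {r : ℝ} (hr : 0 ≤ r) :
    ∫ t in Ioc (0:ℝ) 1, max (decRearr μ g t - r) 0 = ∫ x, max (g x - r) 0 ∂μ := by
  have hanti : Antitone (fun t => max (decRearr μ g t - r) 0) :=
    fun s s' hss' => max_le_max (sub_le_sub_right (decRearr_antitone hb hss') r) le_rfl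
  have hmeasφ : Measurable (fun t => max (decRearr μ g t - r) 0) := hanti.measurable
  have hintφ : Integrable (fun t => max (decRearr μ g t - r) 0)
      (volume.restrict (Ioc (0:ℝ) 1)) := by
    refine integrable_of_bounds (D := max C 0) hmeasφ.aestronglyMeasurable
      (Filter.Eventually.of_forall (fun t => le_max_right _ _))
      (Filter.Eventually.of_forall (fun t => ?_))
    · exact max_le (by linarith [decRearr_le hb t, le_max_right C 0]) (le_max_right C 0)
  have hintψ : Integrable (fun x => max (g x - r) 0) μ := by
    refine integrable_of_bounds (D := max C 0) ((hm.sub measurable_const).max measurable_const).aestronglyMeasurable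
      (Filter.Eventually.of_forall (fun x => le_max_right _ _)) ?_
    filter_upwards [hb] with x hx
    exact max_le (by linarith [le_max_right C 0, le_max_left C 0]) (le_max_right C 0)
  rw [hintφ.integral_eq_integral_meas_lt (Filter.Eventually.of_forall (fun t => le_max_right _ _)),
      hintψ.integral_eq_integral_meas_lt (Filter.Eventually.of_forall (fun x => le_max_right _ _))]
  apply setIntegral_congr_fun measurableSet_Ioi
  intro t ht
  simp only [mem_Ioi] at ht
  show ((volume.restrict (Ioc (0:ℝ) 1)) {s | t < max (decRearr μ g s - r) 0}).toReal
      = (μ {x | t < max (g x - r) 0}).toReal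
  congr 1
  have hmset : MeasurableSet {s : ℝ | t < max (decRearr μ g s - r) 0} :=
    measurableSet_lt measurable_const hmeasφ
  rw [Measure.restrict_apply hmset]
  have h1 : {s : ℝ | t < max (decRearr μ g s - r) 0} = {s : ℝ | r + t < decRearr μ g s} := by
    ext s
    simp only [mem_setOf_eq, lt_max_iff]
    constructor
    · rintro (hc | hc)
      · linarith
      · linarith
    · intro hc; left; linarith
  have h2 : {x | t < max (g x - r) 0} = {x | r + t < g x} := by
    ext x
    simp only [mem_setOf_eq, lt_max_iff]
    constructor
    · rintro (hc | hc)
      · linarith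
      · linarith
    · intro hc; left; linarith
  rw [h1, h2, dist_decRearr_eq hm hb (by linarith)]

end Aux

/-- Optimality of the water-filling `f_c = max{f,c}` with respect to submajorization. -/
theorem waterFilling_submajorized {X : Type*} [MeasurableSpace X]
    (μ : Measure X) [IsProbabilityMeasure μ] (f : X → ℝ) (hfm : Measurable f)
    (hf0 : ∀ᵐ x ∂μ, 0 ≤ f x) (hfb : ∃ C, ∀ᵐ x ∂μ, f x ≤ C)
    (w : ℝ) (hw : (∫ x, f x ∂μ) ≤ w)
    (c : ℝ) (hc : essInf f μ ≤ c) (hcw : (∫ x, max (f x) c ∂μ) = w)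
    (h : X → ℝ) (hhm : Measurable h) (hh0 : ∀ᵐ x ∂μ, 0 ≤ h x)
    (hhb : ∃ C, ∀ᵐ x ∂μ, h x ≤ C)
    (hfh : ∀ᵐ x ∂μ, f x ≤ h x) (hhw : w ≤ ∫ x, h x ∂μ) :
    Submajorizes μ h (fun x => max (f x) c) := by
  intro s hs
  obtain ⟨hs0, hs1⟩ := hs
  obtain ⟨Cf, hCf⟩ := hfb
  obtain ⟨Ch, hCh⟩ := hhb
  set fc : X → ℝ := fun x => max (f x) c with hfcdef
  have hfcm : Measurable fc := hfm.max measurable_const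
  have hfcb : ∀ᵐ x ∂μ, fc x ≤ max Cf c := by
    filter_upwards [hCf] with x hx
    exact max_le_max hx le_rfl
  have hfc0 : ∀ᵐ x ∂μ, 0 ≤ fc x := by
    filter_upwards [hf0] with x hx
    exact le_trans hx (le_max_left _ _)
  set F : ℝ → ℝ := decRearr μ fc with hFdef
  set H : ℝ → ℝ := decRearr μ h with hHdef
  set r : ℝ := H s with hrdef
  have hr0 : 0 ≤ r := decRearr_nonneg s
  have hHanti : Antitone H := decRearr_antitone hCh
  have hFanti : Antitone F := decRearr_antitone hfcb
  have hInth : Integrable h μ := integrable_of_bounds hhm.aestronglyMeasurable hh0 hCh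
  have hIntfc : Integrable fc μ := integrable_of_bounds hfcm.aestronglyMeasurable hfc0 hfcb
  -- Step A : ∫₀ˢ H = r*s + ∫_{Ioc 0 1} max (H t - r) 0
  have stepA : ∫ t in (0:ℝ)..s, H t = r * s + ∫ t in Ioc (0:ℝ) 1, max (H t - r) 0 := by
    have hφanti : Antitone (fun t => max (H t - r) 0) :=
      fun a b hab => max_le_max (sub_le_sub_right (hHanti hab) r) le_rfl
    have h1 : IntervalIntegrable (fun t => max (H t - r) 0) volume 0 s :=
      hφanti.intervalIntegrable
    have h2 : IntervalIntegrable (fun t => max (H t - r) 0) volume s 1 :=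
      hφanti.intervalIntegrable
    have hsplit : ∫ t in Ioc (0:ℝ) 1, max (H t - r) 0
        = (∫ t in (0:ℝ)..s, max (H t - r) 0) + ∫ t in s..(1:ℝ), max (H t - r) 0 := by
      rw [intervalIntegral.integral_add_adjacent_intervals h1 h2,
        intervalIntegral.integral_of_le (by norm_num : (0:ℝ) ≤ 1)]
    have hzero : ∫ t in s..(1:ℝ), max (H t - r) 0 = 0 := by
      rw [intervalIntegral.integral_congr (g := fun _ => (0:ℝ))]
      · exact intervalIntegral.integral_zero
      · intro t htmem
        rw [uIcc_of_le hs1, mem_Icc] at htmem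
        have : H t ≤ r := hHanti htmem.1
        simp only [max_eq_right (sub_nonpos.2 this)]
    have heqn : ∫ t in (0:ℝ)..s, max (H t - r) 0 = ∫ t in (0:ℝ)..s, (H t - r) := by
      apply intervalIntegral.integral_congr
      intro t htmem
      rw [uIcc_of_le hs0, mem_Icc] at htmem
      have : r ≤ H t := hHanti htmem.2
      simp only [max_eq_left (sub_nonneg.2 this)]
    have hHint : IntervalIntegrable H volume 0 s := hHanti.intervalIntegrable
    rw [hsplit, hzero, add_zero, heqn,
      intervalIntegral.integral_sub hHint intervalIntegrable_const,
      intervalIntegral.integral_const]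
    simp only [sub_zero, smul_eq_mul]
    ring
  -- Step B: for any r' ≥ 0 : ∫₀ˢ F ≤ r'*s + ∫_{Ioc 0 1} max (F t - r') 0
  have stepB : ∀ r' : ℝ, 0 ≤ r' →
      ∫ t in (0:ℝ)..s, F t ≤ r' * s + ∫ t in Ioc (0:ℝ) 1, max (F t - r') 0 := by
    intro r' _
    have hφanti : Antitone (fun t => max (F t - r') 0) :=
      fun a b hab => max_le_max (sub_le_sub_right (hFanti hab) r') le_rfl
    have hψanti : Antitone (fun t => r' + max (F t - r') 0) :=
      fun a b hab => add_le_add_right (hφanti hab) r'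
    have step1 : ∫ t in (0:ℝ)..s, F t ≤ ∫ t in (0:ℝ)..s, (r' + max (F t - r') 0) := by
      apply intervalIntegral.integral_mono_on hs0 hFanti.intervalIntegrable
        hψanti.intervalIntegrable
      intro t _
      rcases le_or_gt (F t - r') 0 with hle | hlt
      · have := max_eq_right hle
        rw [this]
        linarith
      · have := max_eq_left hlt.le
        rw [this]
        linarith
    have step2 : ∫ t in (0:ℝ)..s, (r' + max (F t - r') 0)
        = r' * s + ∫ t in (0:ℝ)..s, max (F t - r') 0 := by
      rw [intervalIntegral.integral_add intervalIntegrable_const hφanti.intervalIntegrable,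
        intervalIntegral.integral_const]
      simp only [sub_zero, smul_eq_mul]
      ring
    have step3 : ∫ t in (0:ℝ)..s, max (F t - r') 0 ≤ ∫ t in Ioc (0:ℝ) 1, max (F t - r') 0 := by
      rw [← intervalIntegral.integral_of_le (by norm_num : (0:ℝ) ≤ 1),
        ← intervalIntegral.integral_add_adjacent_intervals
          (hφanti.intervalIntegrable (a := 0) (b := s)) (hφanti.intervalIntegrable (a := s) (b := 1))]
      have : 0 ≤ ∫ t in s..(1:ℝ), max (F t - r') 0 :=
        intervalIntegral.integral_nonneg hs1 (fun t _ => le_max_right _ _)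
      linarith
    linarith
  -- transfer to the measure space
  have keyF : ∀ r' : ℝ, 0 ≤ r' →
      ∫ t in Ioc (0:ℝ) 1, max (F t - r') 0 = ∫ x, max (fc x - r') 0 ∂μ :=
    fun r' hr' => integral_decRearr_sub_max hfcm hfcb hr'
  have keyH : ∫ t in Ioc (0:ℝ) 1, max (H t - r) 0 = ∫ x, max (h x - r) 0 ∂μ :=
    integral_decRearr_sub_max hhm hCh hr0
  have hIntψ : Integrable (fun x => max (h x - r) 0) μ := by
    refine integrable_of_bounds (D := max Ch 0)
      ((hhm.sub measurable_const).max measurable_const).aestronglyMeasurable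
      (Filter.Eventually.of_forall (fun x => le_max_right _ _)) ?_
    filter_upwards [hCh] with x hx
    exact max_le (by linarith [le_max_left Ch 0]) (le_max_right _ _)
  rcases le_or_gt c r with hcr | hrc
  · -- case c ≤ r
    have hcomp : ∫ x, max (fc x - r) 0 ∂μ ≤ ∫ x, max (h x - r) 0 ∂μ := by
      apply integral_mono_ae _ hIntψ
      · filter_upwards [hfh] with x hx
        apply max_le _ (le_max_right _ _)
        have h1 : f x - r ≤ max (h x - r) 0 := le_trans (by linarith) (le_max_left _ _)
        have h2 : c - r ≤ max (h x - r) 0 := le_trans (by linarith) (le_max_right _ _)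
        have heq : fc x - r = max (f x - r) (c - r) := by
          simp [hfcdef, max_sub_sub_right]
        rw [heq]
        exact max_le h1 h2
      · refine integrable_of_bounds (D := max (max Cf c) 0)
          ((hfcm.sub measurable_const).max measurable_const).aestronglyMeasurable
          (Filter.Eventually.of_forall (fun x => le_max_right _ _)) ?_
        filter_upwards [hfcb] with x hx
        exact max_le (by linarith [le_max_left (max Cf c) 0]) (le_max_right _ _)
    calc ∫ t in (0:ℝ)..s, F t ≤ r * s + ∫ t in Ioc (0:ℝ) 1, max (F t - r) 0 := stepB r hr0
    _ = r * s + ∫ x, max (fc x - r) 0 ∂μ := by rw [keyF r hr0]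
    _ ≤ r * s + ∫ x, max (h x - r) 0 ∂μ := by linarith
    _ = r * s + ∫ t in Ioc (0:ℝ) 1, max (H t - r) 0 := by rw [keyH]
    _ = ∫ t in (0:ℝ)..s, H t := stepA.symm
  · -- case r < c, so 0 ≤ c
    have hc0 : (0:ℝ) ≤ c := le_trans hr0 hrc.le
    have hfcint : ∫ x, max (fc x - c) 0 ∂μ = w - c := by
      have heq : ∀ x, max (fc x - c) 0 = fc x - c := by
        intro x
        exact max_eq_left (by simp [hfcdef, le_max_right])
      calc ∫ x, max (fc x - c) 0 ∂μ = ∫ x, (fc x - c) ∂μ := by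
            exact integral_congr_ae (Filter.Eventually.of_forall heq)
      _ = (∫ x, fc x ∂μ) - ∫ x, (c:ℝ) ∂μ := integral_sub hIntfc (integrable_const c)
      _ = w - c := by
            rw [integral_const]
            simp only [probReal_univ, ENNReal.toReal_one, one_smul]
            rw [← hcw]
    have hhlow : (∫ x, h x ∂μ) - r ≤ ∫ x, max (h x - r) 0 ∂μ := by
      have : ∫ x, (h x - r) ∂μ ≤ ∫ x, max (h x - r) 0 ∂μ :=
        integral_mono_ae (hInth.sub (integrable_const r)) hIntψ
          (Filter.Eventually.of_forall (fun x => le_max_left _ _))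
      rw [integral_sub hInth (integrable_const r), integral_const] at this
      simpa [measure_univ] using this
    calc ∫ t in (0:ℝ)..s, F t ≤ c * s + ∫ t in Ioc (0:ℝ) 1, max (F t - c) 0 := stepB c hc0
    _ = c * s + (w - c) := by rw [keyF c hc0, hfcint]
    _ ≤ r * s + ((∫ x, h x ∂μ) - r) := by nlinarith [sub_nonneg.2 hhw]
    _ ≤ r * s + ∫ x, max (h x - r) 0 ∂μ := by linarith
    _ = r * s + ∫ t in Ioc (0:ℝ) 1, max (H t - r) 0 := by rw [keyH]
    _ = ∫ t in (0:ℝ)..s, H t := stepA.symm
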